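/- Let d ≥ 1, let p, c, v, w ∈ ℝ^d and B_X, M ∈ ℝ^{d×d}, and suppose the (d+1)×(d+1) real block matrices A = [[1, −pᵀ],[−c, Id − B_X]] and N = [[1, vᵀ],[w, M]] satisfy A·N = Id and N·A = Id. Then M is invertible with inverse (Id − c vᵀ)(Id − B_X), i.e., M · (Id − c vᵀ)(Id − B_X) = Id and (Id − c vᵀ)(Id − B_X) · M = Id. -/

import Mathlib

open Matrix

/-- If the block matrices `A = [[1, −pᵀ],[−c, Id − B_X]]` and `N = [[1, vᵀ],[w, M]]`
are mutually inverse, then `M` is invertible with inverse `(Id − c vᵀ)(Id − B_X)`. -/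
theorem M_inverse {d : ℕ} (hd : 1 ≤ d)
    (p c v w : Fin d → ℝ) (B_X M : Matrix (Fin d) (Fin d) ℝ)
    (hAN : fromBlocks (1 : Matrix (Fin 1) (Fin 1) ℝ) (-replicateRow (Fin 1) p) (-replicateCol (Fin 1) c)
          ((1 : Matrix (Fin d) (Fin d) ℝ) - B_X) *
        fromBlocks (1 : Matrix (Fin 1) (Fin 1) ℝ) (replicateRow (Fin 1) v) (replicateCol (Fin 1) w) M = 1)
    (hNA : fromBlocks (1 : Matrix (Fin 1) (Fin 1) ℝ) (replicateRow (Fin 1) v) (replicateCol (Fin 1) w) M *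
        fromBlocks (1 : Matrix (Fin 1) (Fin 1) ℝ) (-replicateRow (Fin 1) p) (-replicateCol (Fin 1) c)
          ((1 : Matrix (Fin d) (Fin d) ℝ) - B_X) = 1) :
    M * (((1 : Matrix (Fin d) (Fin d) ℝ) - vecMulVec c v) *
        ((1 : Matrix (Fin d) (Fin d) ℝ) - B_X)) = 1 ∧
    (((1 : Matrix (Fin d) (Fin d) ℝ) - vecMulVec c v) *
        ((1 : Matrix (Fin d) (Fin d) ℝ) - B_X)) * M = 1 := by
  rw [fromBlocks_multiply, ← fromBlocks_one, fromBlocks_inj] at hAN hNA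
  obtain ⟨hA11, hA12, hA21, hA22⟩ := hAN
  obtain ⟨hN11, hN12, hN21, hN22⟩ := hNA
  set B := (1 : Matrix (Fin d) (Fin d) ℝ) - B_X with hB
  rw [vecMulVec_eq (Fin 1)]
  set C := replicateCol (Fin 1) c with hC
  set V := replicateRow (Fin 1) v with hV
  set W := replicateCol (Fin 1) w with hW
  set P := replicateRow (Fin 1) p with hP
  -- vᵀ c = 0
  have hvc : V * C = 0 := by
    have h : 1 + -(V * C) = 1 := by simpa [mul_neg] using hN11
    have h2 : -(V * C) = 0 := by
      have := add_right_cancel (b := (1 : Matrix (Fin 1) (Fin 1) ℝ))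
        (a := -(V * C)) (c := 0)
      simpa [add_comm] using h
    simpa [neg_eq_zero] using h2
  -- row v * B = row p
  have hvB : V * B = P := by
    have h : -P + V * B = 0 := by simpa using hN12
    have := eq_of_sub_eq_zero (a := V * B) (b := P) (by rw [sub_eq_add_neg, add_comm]; simpa using h)
    exact this
  -- M * col c = col w
  have hMc : M * C = W := by
    have h : W - M * C = 0 := by simpa [mul_neg, sub_eq_add_neg] using hN21
    exact (sub_eq_zero.mp h).symm
  -- M * B = 1 + w pᵀ
  have hMB : M * B = 1 + W * P := by
    have h : M * B - W * P = 1 := by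
      simpa [mul_neg, sub_eq_add_neg, add_comm] using hN22
    rw [sub_eq_iff_eq_add] at h
    rw [h, add_comm]
  -- B * M = 1 + c vᵀ
  have hBM : B * M = 1 + C * V := by
    have h : B * M - C * V = 1 := by
      simpa [neg_mul, sub_eq_add_neg, add_comm] using hA22
    rw [sub_eq_iff_eq_add] at h
    rw [h, add_comm]
  constructor
  · rw [sub_mul, one_mul, mul_sub, hMB, ← Matrix.mul_assoc,
      ← Matrix.mul_assoc, hMc, Matrix.mul_assoc, hvB]
    exact add_sub_cancel_right _ _
  · rw [Matrix.mul_assoc, hBM, sub_mul, one_mul, mul_add, mul_one]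
    have h0 : C * V * (C * V) = 0 := by
      rw [← Matrix.mul_assoc (C * V) C V, Matrix.mul_assoc C V C, hvc,
        Matrix.mul_zero, Matrix.zero_mul]
    change 1 + C * V - (C * V + C * V * (C * V)) = 1
    rw [h0, add_zero, add_sub_cancel_right]
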